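/- Let V be a finite vertex set partitioned into a set of depots I and a set of targets J, and let x be an integer-valued edge multiplicity function on unordered pairs of distinct vertices of V satisfying: x{i,i'} = 0 for all depots i, i' ∈ I (no depot–depot edges); x{j,l} ∈ {0,1} for all targets j, l ∈ J; x{i,j} ∈ {0,1,2} for all i ∈ I, j ∈ J; every target j ∈ J has degree exactly 2 in the multigraph defined by x (i.e., the sum of x over all pairs incident to j equals 2); and every connected component of the support graph of x that contains a target contains exactly one depot. Then for every pair of distinct targets j, l ∈ J and every proper subset I' ⊂ I, the path elimination inequality Σ_{i ∈ I'} x{i,j} + 3·x{j,l} + Σ_{k ∈ I∖I'} x{k,l} ≤ 4 holds. -/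
import Mathlib


/-- Two-vertex path elimination constraints are valid for feasible multi-depot route
solutions.  `V` is partitioned into depots `I` and targets `J`; `x` is an integer edge
multiplicity function on unordered pairs of distinct vertices with no depot–depot edges,
`x{j,l} ∈ {0,1}` for targets `j,l`, `x{i,j} ∈ {0,1,2}` for a depot `i` and a target `j`,
every target has degree exactly `2`, and every connected component of the support graph
of `x` containing a target contains exactly one depot.  Then for all distinct targets
`j, l ∈ J` and every proper subset `I' ⊂ I`,
`∑_{i ∈ I'} x{i,j} + 3·x{j,l} + ∑_{k ∈ I∖I'} x{k,l} ≤ 4`. -/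
theorem path_elimination_two_vertex_valid {V : Type*} [Fintype V] [DecidableEq V]
    (I J : Finset V) (hdisj : Disjoint I J) (hpart : I ∪ J = Finset.univ)
    (x : Sym2 V → ℤ)
    (hdiag : ∀ v : V, x s(v, v) = 0)
    (hII : ∀ i ∈ I, ∀ i' ∈ I, x s(i, i') = 0)
    (hJJ : ∀ j ∈ J, ∀ l ∈ J, x s(j, l) = 0 ∨ x s(j, l) = 1)
    (hIJ : ∀ i ∈ I, ∀ j ∈ J, x s(i, j) = 0 ∨ x s(i, j) = 1 ∨ x s(i, j) = 2)
    (hdeg : ∀ j ∈ J, ∑ v ∈ Finset.univ.erase j, x s(j, v) = 2)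
    (hcomp : ∀ j ∈ J, ∃! i : V, i ∈ I ∧
      (SimpleGraph.fromRel fun u v => x s(u, v) ≠ 0).Reachable j i) :
    ∀ j ∈ J, ∀ l ∈ J, j ≠ l → ∀ I' : Finset V, I' ⊂ I →
      (∑ i ∈ I', x s(i, j)) + 3 * x s(j, l) + (∑ k ∈ I \ I', x s(k, l)) ≤ 4 := by
  intro j hj l hl hjl I' hI'
  have hIsub : I' ⊆ I := hI'.subset
  have hdiffsub : I \ I' ⊆ I := Finset.sdiff_subset
  -- nonnegativity of x on all pairs
  have hnn : ∀ u v : V, 0 ≤ x s(u, v) := by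
    intro u v
    have hu : u ∈ I ∪ J := by rw [hpart]; exact Finset.mem_univ u
    have hv : v ∈ I ∪ J := by rw [hpart]; exact Finset.mem_univ v
    rw [Finset.mem_union] at hu hv
    rcases hu with hu | hu <;> rcases hv with hv | hv
    · rw [hII u hu v hv]
    · rcases hIJ u hu v hv with h | h | h <;> omega
    · have hs : s(u, v) = s(v, u) := Sym2.eq_swap
      rw [hs]
      rcases hIJ v hv u hu with h | h | h <;> omega
    · rcases hJJ u hu v hv with h | h <;> omega
  -- key bound: for targets a ≠ b and S ⊆ I, ∑_{i∈S} x(i,a) + x(a,b) ≤ 2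
  have key : ∀ a ∈ J, ∀ b ∈ J, a ≠ b → ∀ S ⊆ I,
      (∑ i ∈ S, x s(i, a)) + x s(a, b) ≤ 2 := by
    intro a ha b hb hab S hS
    have hbS : b ∉ S := fun h => (Finset.disjoint_left.mp hdisj (hS h)) hb
    have hsub : insert b S ⊆ Finset.univ.erase a := by
      intro v hv
      refine Finset.mem_erase.mpr ⟨?_, Finset.mem_univ _⟩
      rcases Finset.mem_insert.mp hv with rfl | hv
      · exact fun h => hab h.symm
      · intro h; subst h; exact (Finset.disjoint_left.mp hdisj (hS hv)) ha
    have h1 : ∑ i ∈ S, x s(i, a) = ∑ i ∈ S, x s(a, i) := by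
      refine Finset.sum_congr rfl fun i _ => ?_
      rw [Sym2.eq_swap]
    have h2 : ∑ i ∈ insert b S, x s(a, i) ≤ ∑ v ∈ Finset.univ.erase a, x s(a, v) :=
      Finset.sum_le_sum_of_subset_of_nonneg hsub fun v _ _ => hnn a v
    rw [Finset.sum_insert hbS] at h2
    rw [hdeg a ha] at h2
    rw [h1]
    linarith
  have hA2 : (∑ i ∈ I', x s(i, j)) + x s(j, l) ≤ 2 := key j hj l hl hjl I' hIsub
  have hC2 : (∑ k ∈ I \ I', x s(k, l)) + x s(j, l) ≤ 2 := by
    have := key l hl j hj hjl.symm (I \ I') hdiffsub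
    rwa [show s(l, j) = s(j, l) from Sym2.eq_swap] at this
  have hAnn : 0 ≤ ∑ i ∈ I', x s(i, j) := Finset.sum_nonneg fun i _ => hnn i j
  have hCnn : 0 ≤ ∑ k ∈ I \ I', x s(k, l) := Finset.sum_nonneg fun k _ => hnn k l
  rcases hJJ j hj l hl with hB | hB
  · rw [hB] at hA2 hC2 ⊢; linarith
  · -- x(j,l) = 1 : show the two sums can't both be positive
    rw [hB] at hA2 hC2 ⊢
    by_contra hcon
    push_neg at hcon
    have hApos : 1 ≤ ∑ i ∈ I', x s(i, j) := by
      by_contra h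
      push_neg at h
      have : ∑ k ∈ I \ I', x s(k, l) ≤ 2 := by linarith
      omega
    have hCpos : 1 ≤ ∑ k ∈ I \ I', x s(k, l) := by omega
    obtain ⟨i, hiI', hxij⟩ : ∃ i ∈ I', x s(i, j) ≠ 0 := by
      by_contra h
      push_neg at h
      have : ∑ i ∈ I', x s(i, j) = 0 := Finset.sum_eq_zero h
      omega
    obtain ⟨k, hkI, hxkl⟩ : ∃ k ∈ I \ I', x s(k, l) ≠ 0 := by
      by_contra h
      push_neg at h
      have : ∑ k ∈ I \ I', x s(k, l) = 0 := Finset.sum_eq_zero h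
      omega
    set G := SimpleGraph.fromRel fun u v => x s(u, v) ≠ 0 with hG
    have hjne : j ≠ i := fun h => (Finset.disjoint_left.mp hdisj (hIsub hiI')) (h ▸ hj)
    have hlne : l ≠ k := fun h =>
      (Finset.disjoint_left.mp hdisj (hdiffsub hkI)) (h ▸ hl)
    have hadj_ji : G.Adj j i := by
      rw [hG, SimpleGraph.fromRel_adj]
      exact ⟨hjne, Or.inr hxij⟩
    have hadj_jl : G.Adj j l := by
      rw [hG, SimpleGraph.fromRel_adj]
      refine ⟨hjl, Or.inl ?_⟩
      rw [hB]; exact one_ne_zero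
    have hadj_lk : G.Adj l k := by
      rw [hG, SimpleGraph.fromRel_adj]
      exact ⟨hlne, Or.inr hxkl⟩
    obtain ⟨i0, _, huniq⟩ := hcomp j hj
    have h1 : i = i0 := huniq i ⟨hIsub hiI', hadj_ji.reachable⟩
    have h2 : k = i0 := huniq k ⟨hdiffsub hkI, hadj_jl.reachable.trans hadj_lk.reachable⟩
    have : k ∉ I' := (Finset.mem_sdiff.mp hkI).2
    exact this ((h2.trans h1.symm) ▸ hiI')
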